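/- Let H and G be locally compact Hausdorff topological groups and let α : H → G be a continuous group homomorphism. Then α is proper (the preimage of every compact subset of G is compact) if and only if the kernel ker α is compact and the induced bijective group homomorphism α̃ : H/ker α → α(H), where α(H) carries the topology induced from G, is an isomorphism of topological groups (a group isomorphism that is also a homeomorphism). -/

import Mathlib

open Set Topology

/-- A weakly locally compact subgroup of a Hausdorff topological group is closed. -/
theorem aux_subgroup_isClosed {G : Type*} [Group G] [TopologicalSpace G]
    [IsTopologicalGroup G] [T2Space G] (S : Subgroup G)
    [WeaklyLocallyCompactSpace S] : IsClosed (S : Set G) := by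
  obtain ⟨K, hK, hKmem⟩ := exists_compact_mem_nhds (1 : S)
  have hKc : IsClosed (Subtype.val '' K : Set G) :=
    (hK.image continuous_subtype_val).isClosed
  have hKS : (Subtype.val '' K : Set G) ⊆ (S : Set G) := by
    rintro x ⟨⟨y, hy⟩, -, rfl⟩; exact hy
  rw [nhds_subtype_eq_comap] at hKmem
  obtain ⟨t, ht, hts⟩ := hKmem
  rw [Subgroup.coe_one] at ht
  obtain ⟨V, hV, hVt⟩ := exists_nhds_split_inv ht
  refine isClosed_of_closure_subset fun x hx => ?_
  set W : Set G := (fun g => g * x⁻¹) ⁻¹' interior V with hW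
  have hWopen : IsOpen W := isOpen_interior.preimage (continuous_mul_right x⁻¹)
  have hxW : x ∈ W := by
    simp only [hW, mem_preimage, mul_inv_cancel]
    exact mem_interior_iff_mem_nhds.mpr hV
  obtain ⟨s, hsW, hsS⟩ := mem_closure_iff.mp hx W hWopen hxW
  have hxcl : x ∈ closure ((S : Set G) ∩ W) := by
    rw [mem_closure_iff]
    intro o ho hxo
    obtain ⟨y, hy, hyS⟩ := mem_closure_iff.mp hx (o ∩ W) (ho.inter hWopen) ⟨hxo, hxW⟩
    exact ⟨y, hy.1, hyS, hy.2⟩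
  have hmaps : Set.MapsTo (fun g => g * s⁻¹) ((S : Set G) ∩ W) (Subtype.val '' K) := by
    rintro u ⟨huS, huW⟩
    have h1 : u * s⁻¹ ∈ t := by
      have := hVt (u * x⁻¹) (interior_subset huW) (s * x⁻¹) (interior_subset hsW)
      simpa [div_eq_mul_inv, mul_assoc] using this
    have h2 : u * s⁻¹ ∈ S := S.mul_mem huS (S.inv_mem hsS)
    exact ⟨⟨u * s⁻¹, h2⟩, hts h1, rfl⟩
  have hxs : x * s⁻¹ ∈ Subtype.val '' K := by
    have := map_mem_closure (continuous_mul_right s⁻¹) hxcl hmaps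
    rwa [hKc.closure_eq] at this
  have := S.mul_mem (hKS hxs) hsS
  simpa using this

/-- The quotient map by a compact subgroup is proper. -/
theorem aux_isProperMap_mk {G : Type*} [Group G] [TopologicalSpace G] [IsTopologicalGroup G]
    (N : Subgroup G) (hN : IsCompact (N : Set G)) :
    IsProperMap (QuotientGroup.mk : G → G ⧸ N) := by
  rw [isProperMap_iff_isClosedMap_and_compact_fibers]
  refine ⟨continuous_quotient_mk', QuotientGroup.isClosedMap_coe hN, ?_⟩
  intro y
  induction y using Quotient.inductionOn with
  | h g =>
    have heq : ((QuotientGroup.mk : G → G ⧸ N) ⁻¹' {Quotient.mk'' g}) =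
        (fun n => g * n) '' (N : Set G) := by
      ext x
      constructor
      · intro hxm
        have hx : (x : G ⧸ N) = (g : G ⧸ N) := hxm
        have : x⁻¹ * g ∈ N := QuotientGroup.eq.mp hx
        refine ⟨g⁻¹ * x, ?_, by group⟩
        simpa using N.inv_mem this
      · rintro ⟨n, hn, rfl⟩
        have : ((g * n : G) : G ⧸ N) = (g : G ⧸ N) := by
          rw [QuotientGroup.eq]
          simpa using N.inv_mem hn
        exact this
    rw [heq]
    exact hN.image (continuous_mul_left g)

theorem proper_iff_ker_compact_and_quotient_iso
    {H G : Type*} [Group H] [TopologicalSpace H] [IsTopologicalGroup H]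
    [LocallyCompactSpace H] [T2Space H]
    [Group G] [TopologicalSpace G] [IsTopologicalGroup G]
    [LocallyCompactSpace G] [T2Space G]
    (α : H →* G) (hα : Continuous α) :
    (∀ K : Set G, IsCompact K → IsCompact (α ⁻¹' K)) ↔
      (IsCompact (α.ker : Set H) ∧
        Continuous (QuotientGroup.quotientKerEquivRange α) ∧
        Continuous (QuotientGroup.quotientKerEquivRange α).symm) := by
  set e := QuotientGroup.quotientKerEquivRange α with he
  have key : ∀ h : H, ((e (QuotientGroup.mk h) : α.range) : G) = α h := fun h => rfl
  constructor
  · intro hproper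
    have hprop : IsProperMap (α : H → G) :=
      isProperMap_iff_isCompact_preimage.mpr ⟨hα, fun K hK => hproper K hK⟩
    have hker : IsCompact (α.ker : Set H) := by
      have h1 := hproper {1} isCompact_singleton
      have : (α.ker : Set H) = α ⁻¹' {1} := by
        ext h; simp [α.mem_ker]
      rw [this]; exact h1
    refine ⟨hker, ?_, ?_⟩
    · rw [(QuotientGroup.isQuotientMap_mk α.ker).continuous_iff]
      have : (⇑e ∘ QuotientGroup.mk) = fun h : H => (⟨α h, ⟨h, rfl⟩⟩ : α.range) := by
        funext h
        exact Subtype.ext (key h)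
      rw [this]
      exact hα.subtype_mk _
    · rw [continuous_iff_isClosed]
      intro C hC
      have himg : ⇑e.symm ⁻¹' C =
          Subtype.val ⁻¹' (α '' ((QuotientGroup.mk : H → H ⧸ α.ker) ⁻¹' C)) := by
        ext ⟨x, hx⟩
        simp only [mem_preimage]
        constructor
        · intro hmem
          obtain ⟨h, hh⟩ := QuotientGroup.mk_surjective (e.symm ⟨x, hx⟩)
          refine ⟨h, ?_, ?_⟩
          · show QuotientGroup.mk h ∈ C
            rw [hh]; exact hmem
          · have h3 : e (QuotientGroup.mk h) = ⟨x, hx⟩ := by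
              rw [hh, MulEquiv.apply_symm_apply]
            exact (key h).symm.trans (congrArg Subtype.val h3)
        · rintro ⟨h, hhC, hhx⟩
          have : e (QuotientGroup.mk h) = ⟨x, hx⟩ := Subtype.ext (by rw [key h, hhx])
          have h2 : e.symm ⟨x, hx⟩ = QuotientGroup.mk h := by
            rw [← this, MulEquiv.symm_apply_apply]
          rw [h2]; exact hhC
      rw [himg]
      exact (hprop.isClosedMap _ (hC.preimage continuous_quotient_mk')).preimage
        continuous_subtype_val
  · rintro ⟨hker, hcont, hcont_symm⟩
    intro K hK
    let homeo : (H ⧸ α.ker) ≃ₜ α.range := ⟨e.toEquiv, hcont, hcont_symm⟩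
    haveI : WeaklyLocallyCompactSpace α.range :=
      homeo.symm.isClosedEmbedding.weaklyLocallyCompactSpace
    have hclosedrange : IsClosed (α.range : Set G) := aux_subgroup_isClosed α.range
    have c1 : IsCompact (Subtype.val ⁻¹' K : Set α.range) := by
      rw [Topology.IsEmbedding.subtypeVal.isCompact_iff]
      have himg2 : Subtype.val '' (Subtype.val ⁻¹' K : Set α.range) = K ∩ (α.range : Set G) := by
        ext x
        constructor
        · rintro ⟨y, hy, rfl⟩; exact ⟨hy, y.2⟩
        · rintro ⟨hxK, hxR⟩; exact ⟨⟨x, hxR⟩, hxK, rfl⟩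
      rw [himg2]
      exact hK.inter_right hclosedrange
    have c2 : IsCompact (⇑e ⁻¹' (Subtype.val ⁻¹' K)) :=
      homeo.isCompact_preimage.mpr c1
    have hpre : α ⁻¹' K = (QuotientGroup.mk : H → H ⧸ α.ker) ⁻¹' (⇑e ⁻¹' (Subtype.val ⁻¹' K)) := by
      ext h
      simp only [mem_preimage, key h]
    rw [hpre]
    exact (aux_isProperMap_mk α.ker hker).isCompact_preimage c2
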